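/- If μ < λ ≤ 2^μ are infinite cardinals, then there exists a subset A of the space 2^λ (with the product topology of the discrete two-point space) such that |A| ≤ μ and A is dense in 2^λ. -/
import Mathlib


universe u

open Cardinal Set

/-- If `μ < λ ≤ 2 ^ μ` are infinite cardinals, then the space `2 ^ λ` of functions
from `λ` to the discrete two-point space `Bool`, with the product (Tychonoff)
topology, has a dense subset of cardinality at most `μ`. -/
theorem dense_subset_of_cantor_cube (μ lam : Cardinal.{u}) (hμ : Cardinal.aleph0 ≤ μ)
    (h1 : μ < lam) (h2 : lam ≤ 2 ^ μ) :
    ∃ A : Set (lam.out → Bool), Dense A ∧ Cardinal.mk A ≤ μ := by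
  classical
  set M := μ.out with hM
  have hMcard : #M = μ := mk_out μ
  have hMinf : Infinite M := by
    rw [Cardinal.infinite_iff, hMcard]; exact hμ
  have hle : #(lam.out) ≤ #(M → Bool) := by
    rw [mk_out]
    calc lam ≤ 2 ^ μ := h2
      _ = #(M → Bool) := by
        rw [Cardinal.mk_arrow, hMcard]
        simp
  obtain ⟨e⟩ := (Cardinal.le_def _ _).mp hle
  let p : (Σ F : Finset M, ((F → Bool) → Bool)) → (lam.out → Bool) :=
    fun Fg i => Fg.2 (fun m => e i m.1)
  refine ⟨Set.range p, ?_, ?_⟩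
  · rw [dense_iff_inter_open]
    rintro U hU ⟨x, hx⟩
    obtain ⟨I, u, hu, hsub⟩ := isOpen_pi_iff.mp hU x hx
    have hsep : ∀ i j : lam.out, i ≠ j → ∃ m : M, e i m ≠ e j m := by
      intro i j hij
      by_contra h
      push_neg at h
      exact hij (e.injective (funext h))
    have key : ∀ i j : lam.out, ∃ m : M, i ≠ j → e i m ≠ e j m := by
      intro i j
      by_cases hij : i = j
      · exact ⟨Classical.arbitrary M, fun h => absurd hij h⟩
      · obtain ⟨m, hm⟩ := hsep i j hij
        exact ⟨m, fun _ => hm⟩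
    choose sep hsepspec using key
    set S : Finset M := (I ×ˢ I).image (fun q => sep q.1 q.2) with hS
    have hres : ∀ i ∈ I, ∀ j ∈ I, (fun m : S => e i m.1) = (fun m : S => e j m.1) → i = j := by
      intro i hi j hj hf
      by_contra hij
      have hmem : sep i j ∈ S :=
        Finset.mem_image.mpr ⟨(i, j), Finset.mem_product.mpr ⟨hi, hj⟩, rfl⟩
      have := congrFun hf ⟨sep i j, hmem⟩
      exact hsepspec i j hij this
    let g : (S → Bool) → Bool := fun h =>
      if hh : ∃ j, j ∈ I ∧ (fun m : S => e j m.1) = h then x hh.choose else false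
    refine ⟨p ⟨S, g⟩, hsub ?_, Set.mem_range_self _⟩
    intro i hi
    have hi' : i ∈ I := hi
    have hh : ∃ j, j ∈ I ∧ (fun m : S => e j m.1) = (fun m : S => e i m.1) := ⟨i, hi', rfl⟩
    have hval : p ⟨S, g⟩ i = x i := by
      show g (fun m : S => e i m.1) = x i
      simp only [g, dif_pos hh]
      have hc := hh.choose_spec
      have hci : hh.choose = i := hres _ hc.1 _ hi' hc.2
      rw [hci]
    rw [hval]
    exact (hu i hi').2
  · calc #(Set.range p) ≤ #(Σ F : Finset M, ((F → Bool) → Bool)) := mk_range_le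
      _ = Cardinal.sum (fun F : Finset M => #((F → Bool) → Bool)) := mk_sigma _
      _ ≤ Cardinal.sum (fun _ : Finset M => ℵ₀) :=
          Cardinal.sum_le_sum _ _ (fun F => (Cardinal.lt_aleph0_of_finite _).le)
      _ = #(Finset M) * ℵ₀ := Cardinal.sum_const' _ _
      _ = μ * ℵ₀ := by rw [Cardinal.mk_finset_of_infinite, hMcard]
      _ = μ := Cardinal.mul_aleph0_eq hμ
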